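/- arXiv:1510.05050 — 3 statements merged into one kernel-verified Lean document; each statement's English description precedes it below -/
import Mathlib

section
/- Let λ = ρe^{iφ} with ρ ≥ 0, φ ∈ [0,π/2), m > 0, fix q ∈ ℤ, and let Γ : P → ℝ be any real function on P = {p⃗ ∈ ℤ³ : Σᵢpᵢ = 0}. Then |Σ_{p⃗∈P, p₁=q} C₀(p⃗)/(1 − i√(2λ)C₀(p⃗)Γ(p⃗))| ≤ (1/cos(φ/2)) · Σ_{p⃗∈P, p₁=q} 1/(p⃗²+m²), and the latter sum is finite. -/
open Complex

/-- The set of integer momentum triples satisfying the closure constraint. -/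
def Momenta : Set (ℤ × ℤ × ℤ) := {v | v.1 + v.2.1 + v.2.2 = 0}

/-- Momenta with first component fixed to `q`. -/
def FixedMomenta (q : ℤ) : Set (ℤ × ℤ × ℤ) :=
  {v | v.1 + v.2.1 + v.2.2 = 0 ∧ v.1 = q}

/-- The free propagator `C₀(p⃗) = 1/(p⃗² + m²)`. -/
noncomputable def C0 (m : ℝ) (v : ℤ × ℤ × ℤ) : ℝ :=
  1 / ((v.1 : ℝ)^2 + (v.2.1 : ℝ)^2 + (v.2.2 : ℝ)^2 + m^2)

lemma denom_lb (θ r x : ℝ) (hr : 0 ≤ r) :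
    Real.cos θ ≤ ‖(1 - Complex.I * ((r:ℂ) * Complex.exp (Complex.I * θ)) * (x:ℂ))‖ := by
  set z := 1 - Complex.I * ((r:ℂ) * Complex.exp (Complex.I * θ)) * (x:ℂ) with hzdef
  have hz : z = ⟨1 + x*r*Real.sin θ, -(x*r*Real.cos θ)⟩ := by
    rw [hzdef, mul_comm Complex.I (θ:ℂ), Complex.exp_mul_I, ← Complex.ofReal_cos,
      ← Complex.ofReal_sin]
    simp [Complex.ext_iff, Complex.sin_ofReal_re, Complex.cos_ofReal_re]
    constructor <;> ring
  have key : Real.cos θ ^ 2 ≤ Complex.normSq z := by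
    rw [hz, Complex.normSq_mk]
    nlinarith [sq_nonneg (x*r + Real.sin θ), Real.sin_sq_add_cos_sq θ]
  rw [Complex.norm_def]
  rcases le_or_gt (Real.cos θ) 0 with h | h
  · exact h.trans (Real.sqrt_nonneg _)
  · exact (Real.le_sqrt h.le (Complex.normSq_nonneg z)).mpr key

lemma sqrt_decomp (ρ φ : ℝ) (hρ : 0 ≤ ρ) (hφ0 : 0 ≤ φ) (hφ : φ < Real.pi/2) :
    ∃ r : ℝ, 0 ≤ r ∧ (2 * ((ρ:ℂ) * Complex.exp (Complex.I * φ))) ^ (1/2 : ℂ)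
      = (r:ℂ) * Complex.exp (Complex.I * (↑(φ/2))) := by
  rcases eq_or_lt_of_le hρ with h0 | h0
  · refine ⟨0, le_refl 0, ?_⟩
    have h2 : (2 : ℂ) * ((ρ:ℂ) * Complex.exp (Complex.I * φ)) = 0 := by
      rw [← h0]; simp
    rw [h2, Complex.zero_cpow (by norm_num : (1/2:ℂ) ≠ 0)]
    simp
  · have hpi := Real.pi_pos
    set z : ℂ := 2 * ((ρ:ℂ) * Complex.exp (Complex.I * φ)) with hz
    have hzne : z ≠ 0 := by
      simp [hz, Complex.exp_ne_zero]
      positivity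
    have habs : ‖z‖ = 2 * ρ := by
      rw [hz, norm_mul, norm_mul, Complex.norm_two, Complex.norm_real, Real.norm_eq_abs, abs_of_pos h0,
        Complex.norm_exp]
      simp
    have hform : z = (2*ρ : ℝ) * (Real.cos φ + Real.sin φ * Complex.I) := by
      rw [hz, mul_comm Complex.I (φ:ℂ), Complex.exp_mul_I, ← Complex.ofReal_cos,
        ← Complex.ofReal_sin]
      push_cast; ring
    have harg : Complex.arg z = φ := by
      rw [hform]
      have hr2 : (0:ℝ) < 2 * ρ := by linarith
      have hmem : φ ∈ Set.Ioc (-Real.pi) Real.pi := ⟨by linarith, by linarith⟩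
      rw [Complex.ofReal_cos, Complex.ofReal_sin]
      exact Complex.arg_mul_cos_add_sin_mul_I hr2 hmem
    refine ⟨Real.exp (Real.log (2*ρ) / 2), (Real.exp_pos _).le, ?_⟩
    rw [Complex.cpow_def_of_ne_zero hzne, Complex.log, habs, harg]
    rw [show ((Real.log (2*ρ) : ℂ) + φ * Complex.I) * (1/2 : ℂ)
        = (↑(Real.log (2*ρ)/2) : ℂ) + Complex.I * ↑(φ/2) by push_cast; ring]
    rw [Complex.exp_add, ← Complex.ofReal_exp]

def momEquiv (q : ℤ) : ℤ ≃ FixedMomenta q where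
  toFun n := ⟨(q, n, -q-n), ⟨by ring, rfl⟩⟩
  invFun v := v.1.2.1
  left_inv n := rfl
  right_inv v := by
    obtain ⟨⟨a, b, c⟩, h1, h2⟩ := v
    simp only [FixedMomenta, Set.mem_setOf_eq] at h1 h2
    apply Subtype.ext
    show (q, b, -q-b) = (a, b, c)
    simp only [Prod.mk.injEq]
    refine ⟨by omega, trivial, by omega⟩

lemma C0_summable (m : ℝ) (hm : 0 < m) (q : ℤ) :
    Summable (fun v : FixedMomenta q => C0 m v) := by
  rw [← (momEquiv q).summable_iff]
  have hg : Summable (fun n : ℤ => 1 / (n:ℝ)^2) := Real.summable_one_div_int_pow.mpr one_lt_two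
  apply Summable.of_norm_bounded_eventually hg
  filter_upwards [Filter.eventually_cofinite_ne 0] with n hn
  have hn2 : (0:ℝ) < (n:ℝ)^2 := by
    have : (n:ℝ) ≠ 0 := Int.cast_ne_zero.mpr hn
    positivity
  have hcoe : ((momEquiv q n : FixedMomenta q) : ℤ × ℤ × ℤ) = (q, n, -q-n) := rfl
  rw [Function.comp_apply, hcoe]
  simp only [C0]
  rw [Real.norm_eq_abs, _root_.abs_of_nonneg (by positivity)]
  apply one_div_le_one_div_of_le hn2
  push_cast
  nlinarith [sq_nonneg ((q:ℝ)), sq_nonneg ((-q:ℝ)-(n:ℝ)), sq_nonneg m, hm]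

theorem lemma2_leaf_bound (ρ φ m : ℝ) (hρ : 0 ≤ ρ) (hφ0 : 0 ≤ φ)
    (hφ : φ < Real.pi / 2) (hm : 0 < m) (q : ℤ) (l : ℂ)
    (hl : l = (ρ : ℂ) * Complex.exp (Complex.I * φ))
    (Γ : Momenta → ℝ) :
    ‖∑' v : FixedMomenta q,
        (C0 m v : ℂ) /
          (1 - Complex.I * (2 * l) ^ (1/2 : ℂ) * (C0 m v : ℂ)
            * (Γ ⟨v.1, v.2.1⟩ : ℂ))‖
      ≤ (1 / Real.cos (φ / 2)) * ∑' v : FixedMomenta q, C0 m v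
    ∧ Summable (fun v : FixedMomenta q => C0 m v) := by
  have hpi := Real.pi_pos
  have hcos : 0 < Real.cos (φ/2) := Real.cos_pos_of_mem_Ioo ⟨by linarith, by linarith⟩
  obtain ⟨r, hr, hs⟩ := sqrt_decomp ρ φ hρ hφ0 hφ
  have hsum := C0_summable m hm q
  have hC0 : ∀ v : ℤ × ℤ × ℤ, 0 < C0 m v := fun v => by unfold C0; positivity
  set f : FixedMomenta q → ℂ := fun v =>
    (C0 m v : ℂ) / (1 - Complex.I * (2 * l) ^ (1/2 : ℂ) * (C0 m v : ℂ)
      * (Γ ⟨v.1, v.2.1⟩ : ℂ)) with hfdef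
  have hbound : ∀ v : FixedMomenta q, ‖f v‖ ≤ (1 / Real.cos (φ/2)) * C0 m v := by
    intro v
    have hD : (1 - Complex.I * (2 * l) ^ (1/2 : ℂ) * (C0 m ↑v : ℂ) * (Γ ⟨v.1, v.2.1⟩ : ℂ))
        = 1 - Complex.I * ((r:ℂ) * Complex.exp (Complex.I * (↑(φ/2))))
            * ((C0 m ↑v * Γ ⟨v.1, v.2.1⟩ : ℝ) : ℂ) := by
      rw [hl, hs]; push_cast; ring
    have hlb := denom_lb (φ/2) r (C0 m ↑v * Γ ⟨v.1, v.2.1⟩) hr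
    rw [hfdef]
    simp only
    rw [hD, norm_div, Complex.norm_real, Real.norm_eq_abs, _root_.abs_of_nonneg (hC0 _).le,
      one_div_mul_eq_div]
    gcongr
    exact (hC0 _).le
  have hnorm : Summable (fun v : FixedMomenta q => ‖f v‖) :=
    Summable.of_nonneg_of_le (fun v => norm_nonneg _) hbound (hsum.mul_left _)
  refine ⟨?_, hsum⟩
  calc ‖∑' v : FixedMomenta q, f v‖ = ‖∑' v : FixedMomenta q, f v‖ :=
        rfl
    _ ≤ ∑' v : FixedMomenta q, ‖f v‖ := norm_tsum_le_tsum_norm hnorm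
    _ ≤ ∑' v : FixedMomenta q, (1 / Real.cos (φ/2)) * C0 m v :=
        Summable.tsum_le_tsum hbound hnorm (hsum.mul_left _)
    _ = (1 / Real.cos (φ/2)) * ∑' v : FixedMomenta q, C0 m v := tsum_mul_left
end

section
/- Suppose for each integer n ≥ 2 the n-th term of a series is bounded in modulus by Ω(n)·(2|λ|)ⁿ·Kⁿ/(n!·cos^{2n}(φ/2)) where Ω(n) ≤ 2√(2e)·3^{n−1}·(2√(π/e))^{n−1}·n!. Then the series converges absolutely whenever |λ| < cos²(φ/2)/(24√(π/e)·K). -/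
theorem tree_expansion_convergence (u : ℕ → ℂ) (Ω : ℕ → ℝ) (K : ℝ) (hK : 0 < K)
    (l : ℂ) (φ : ℝ) (hl : l = (‖l‖ : ℂ) * Complex.exp (Complex.I * φ))
    (hu : ∀ n : ℕ, 2 ≤ n →
      ‖u n‖ ≤ Ω n * (2 * ‖l‖) ^ n * K ^ n
        / (Nat.factorial n * Real.cos (φ / 2) ^ (2 * n)))
    (hΩ : ∀ n : ℕ, 2 ≤ n →
      Ω n ≤ 2 * Real.sqrt (2 * Real.exp 1) * 3 ^ (n - 1)
        * (2 * Real.sqrt (Real.pi / Real.exp 1)) ^ (n - 1) * Nat.factorial n)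
    (hsmall : ‖l‖ < Real.cos (φ / 2) ^ 2
        / (24 * Real.sqrt (Real.pi / Real.exp 1) * K)) :
    Summable (fun n : ℕ => ‖u (n + 2)‖) := by
  set s := Real.sqrt (Real.pi / Real.exp 1) with hs_def
  have hs : 0 < s := Real.sqrt_pos.mpr (div_pos Real.pi_pos (Real.exp_pos 1))
  set c2 := Real.cos (φ / 2) ^ 2 with hc2_def
  have hD : 0 < 24 * s * K := by positivity
  have hc2 : 0 < c2 := by
    rcases lt_or_eq_of_le (sq_nonneg (Real.cos (φ / 2))) with h | h
    · exact h
    · exfalso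
      rw [hc2_def, ← h, zero_div] at hsmall
      exact absurd hsmall (not_lt.mpr (norm_nonneg l))
  set r := 12 * s * K * ‖l‖ / c2 with hr_def
  have hr0 : 0 ≤ r := by positivity
  have hr1 : r < 1 := by
    rw [hr_def, div_lt_one hc2]
    have h24 : ‖l‖ * (24 * s * K) < c2 := (lt_div_iff₀ hD).mp hsmall
    nlinarith [norm_nonneg l, hs.le, hK.le]
  set E := 2 * Real.sqrt (2 * Real.exp 1) with hE_def
  have hE : 0 < E := by
    rw [hE_def]; positivity
  have key : ∀ n : ℕ, ‖u (n + 2)‖ ≤ (E / (6 * s)) * r ^ (n + 2) := by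
    intro n
    have h2 : 2 ≤ n + 2 := by omega
    have h1 := hu (n + 2) h2
    have h3 := hΩ (n + 2) h2
    have hm1 : n + 2 - 1 = n + 1 := rfl
    rw [hm1] at h3
    have hfac : (0 : ℝ) < (Nat.factorial (n + 2) : ℝ) := by positivity
    have hcpow : (0 : ℝ) < Real.cos (φ / 2) ^ (2 * (n + 2)) := by
      rw [pow_mul]; exact pow_pos hc2 (n + 2)
    calc ‖u (n + 2)‖
        ≤ Ω (n + 2) * (2 * ‖l‖) ^ (n + 2) * K ^ (n + 2)
            / (Nat.factorial (n + 2) * Real.cos (φ / 2) ^ (2 * (n + 2))) := h1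
      _ ≤ (E * 3 ^ (n + 1) * (2 * s) ^ (n + 1) * Nat.factorial (n + 2))
            * (2 * ‖l‖) ^ (n + 2) * K ^ (n + 2)
            / (Nat.factorial (n + 2) * Real.cos (φ / 2) ^ (2 * (n + 2))) := by
          gcongr
      _ = (E / (6 * s)) * r ^ (n + 2) := by
          rw [hr_def, pow_mul, ← hc2_def]
          have hc2' : c2 ≠ 0 := ne_of_gt hc2
          have hs' : s ≠ 0 := ne_of_gt hs
          have hfac' : (Nat.factorial (n + 2) : ℝ) ≠ 0 := ne_of_gt hfac
          rw [div_pow]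
          field_simp
          ring_nf
          rw [show ((12:ℝ)) ^ n = 2 ^ (n * 2) * 3 ^ n from by
            rw [show (12:ℝ) = 2 ^ 2 * 3 by norm_num, mul_pow, ← pow_mul, Nat.mul_comm]]
          ring
  have hgeo : Summable (fun n : ℕ => (E / (6 * s)) * r ^ (n + 2)) := by
    have h := (summable_geometric_of_lt_one hr0 hr1).mul_left (E / (6 * s) * r ^ 2)
    have heq : (fun n : ℕ => (E / (6 * s)) * r ^ (n + 2))
        = fun n : ℕ => (E / (6 * s) * r ^ 2) * r ^ n := by
      funext n; ring
    rw [heq]; exact h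
  exact Summable.of_nonneg_of_le (fun n => norm_nonneg _) key hgeo
end

section
/- If the Taylor remainders of an analytic function f on the disk {λ : Re(1/λ) > 1/R} satisfy |f(λ) − Σ_{k<r} f_k λ^k| ≤ K·σ^r·r!·|λ|^r uniformly in r, then the Borel transform B(t) = Σ_n f_n tⁿ/n! has radius of convergence at least 1/σ. -/
theorem borel_transform_radius (f : ℂ → ℂ) (a : ℕ → ℂ) (K σ R : ℝ)
    (hK : 0 < K) (hσ : 0 < σ) (hR : 0 < R)
    (hf : AnalyticOn ℂ f {l : ℂ | l ≠ 0 ∧ 1 / R < (1 / l).re})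
    (hrem : ∀ r : ℕ, ∀ l ∈ {l : ℂ | l ≠ 0 ∧ 1 / R < (1 / l).re},
      ‖f l - ∑ k ∈ Finset.range r, a k * l ^ k‖
        ≤ K * σ ^ r * Nat.factorial r * ‖l‖ ^ r) :
    ∀ t : ℂ, ‖t‖ < 1 / σ →
      Summable (fun n : ℕ => a n * t ^ n / (Nat.factorial n : ℂ)) := by
  -- Step 1: coefficient bound ‖a n‖ ≤ K σ^n n!
  have hbound : ∀ n : ℕ, ‖a n‖ ≤ K * σ ^ n * Nat.factorial n := by
    intro n
    have hstep : ∀ ε : ℝ, 0 < ε → ε < R →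
        ‖a n‖ ≤ K * σ ^ n * Nat.factorial n
          + K * σ ^ (n + 1) * Nat.factorial (n + 1) * ε := by
      intro ε hε hεR
      have hmem : (ε : ℂ) ∈ {l : ℂ | l ≠ 0 ∧ 1 / R < (1 / l).re} := by
        constructor
        · exact_mod_cast ne_of_gt hε
        · have : (1 / (ε : ℂ)).re = 1 / ε := by
            rw [← Complex.ofReal_one, ← Complex.ofReal_div, Complex.ofReal_re]
          rw [this]
          exact one_div_lt_one_div_of_lt hε hεR
      have h1 := hrem n (ε : ℂ) hmem
      have h2 := hrem (n + 1) (ε : ℂ) hmem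
      have hne : ‖(ε : ℂ)‖ = ε := by
        rw [Complex.norm_real, Real.norm_of_nonneg hε.le]
      rw [hne] at h1 h2
      have hkey : a n * (ε : ℂ) ^ n
          = (f ε - ∑ k ∈ Finset.range n, a k * (ε : ℂ) ^ k)
            - (f ε - ∑ k ∈ Finset.range (n + 1), a k * (ε : ℂ) ^ k) := by
        rw [Finset.sum_range_succ]; ring
      have hnorm : ‖a n‖ * ε ^ n
          ≤ K * σ ^ n * Nat.factorial n * ε ^ n
            + K * σ ^ (n + 1) * Nat.factorial (n + 1) * ε ^ (n + 1) := by
        have : ‖a n * (ε : ℂ) ^ n‖ = ‖a n‖ * ε ^ n := by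
          rw [norm_mul, norm_pow, hne]
        calc ‖a n‖ * ε ^ n = ‖a n * (ε : ℂ) ^ n‖ := this.symm
          _ ≤ _ := by rw [hkey]; exact (norm_sub_le _ _).trans (add_le_add h1 h2)
      have hεn : (0 : ℝ) < ε ^ n := pow_pos hε n
      calc ‖a n‖ = ‖a n‖ * ε ^ n / ε ^ n := by field_simp
        _ ≤ (K * σ ^ n * Nat.factorial n * ε ^ n
              + K * σ ^ (n + 1) * Nat.factorial (n + 1) * ε ^ (n + 1)) / ε ^ n := by
            gcongr
        _ = K * σ ^ n * Nat.factorial n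
              + K * σ ^ (n + 1) * Nat.factorial (n + 1) * ε := by
            field_simp; ring
    refine le_of_forall_pos_le_add ?_
    intro δ hδ
    set C : ℝ := K * σ ^ (n + 1) * Nat.factorial (n + 1) with hC
    have hCpos : 0 < C := by
      apply mul_pos (mul_pos hK (pow_pos hσ _))
      exact_mod_cast Nat.factorial_pos (n + 1)
    set ε : ℝ := min (R / 2) (δ / C) with hεdef
    have hεpos : 0 < ε := lt_min (by linarith) (div_pos hδ hCpos)
    have hεR : ε < R := (min_le_left _ _).trans_lt (by linarith)
    have h := hstep ε hεpos hεR
    have hCε : C * ε ≤ δ := by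
      have : ε ≤ δ / C := min_le_right _ _
      calc C * ε ≤ C * (δ / C) := by nlinarith
        _ = δ := by field_simp
    linarith
  -- Step 2: comparison with geometric series
  intro t ht
  have hq : σ * ‖t‖ < 1 := by
    have := (lt_div_iff₀ hσ).mp ht
    linarith [mul_comm σ ‖t‖]
  have hq0 : 0 ≤ σ * ‖t‖ := mul_nonneg hσ.le (norm_nonneg t)
  have hgeo : Summable (fun n : ℕ => K * (σ * ‖t‖) ^ n) :=
    (summable_geometric_of_lt_one hq0 hq).mul_left K
  refine Summable.of_norm_bounded hgeo ?_
  intro n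
  have hfacpos : (0 : ℝ) < Nat.factorial n := by exact_mod_cast Nat.factorial_pos n
  have : ‖a n * t ^ n / (Nat.factorial n : ℂ)‖
      = ‖a n‖ * ‖t‖ ^ n / Nat.factorial n := by
    rw [norm_div, norm_mul, norm_pow]
    norm_num
  rw [this]
  rw [div_le_iff₀ hfacpos]
  calc ‖a n‖ * ‖t‖ ^ n ≤ K * σ ^ n * Nat.factorial n * ‖t‖ ^ n := by
        apply mul_le_mul_of_nonneg_right (hbound n) (pow_nonneg (norm_nonneg t) n)
    _ = K * (σ * ‖t‖) ^ n * Nat.factorial n := by ring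
end
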